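/- If B is a binary doubly even [36,8] code with minimum weight at least 16 whose dual code has minimum weight at least 4, then the weight enumerator of B is 1 + 153·y^16 + 72·y^20 + 30·y^24. -/
import Mathlib


open scoped Classical
open Polynomial

/-- Hamming weight of a vector over `ZMod 2`. -/
noncomputable def wt (c : Fin 36 → ZMod 2) : ℕ :=
  (Finset.univ.filter fun i => c i ≠ 0).card

namespace Stmt2Aux

def v (a : ZMod 2) : ℤ := if a = 0 then 0 else 1

lemma v_cube : ∀ a b c : ZMod 2,
    4 * (v a * v b * v c) =
      v a + v b + v c - v (a+b) - v (a+c) - v (b+c) + v (a+b+c) := by decide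

lemma v_sq : ∀ a b : ZMod 2, 2 * (v a * v b) = v a + v b - v (a+b) := by decide

lemma zmod_one_of_ne : ∀ a : ZMod 2, a ≠ 0 → a = 1 := by decide

lemma zmod_add_self : ∀ a : ZMod 2, a + a = 0 := by decide

lemma wv (c : Fin 36 → ZMod 2) : (wt c : ℤ) = ∑ i, v (c i) := by
  unfold wt
  rw [Finset.card_filter]
  push_cast
  apply Finset.sum_congr rfl
  intro i _
  by_cases h : c i = 0 <;> simp [v, h]

lemma wt_le (c : Fin 36 → ZMod 2) : wt c ≤ 36 := by
  unfold wt
  calc (Finset.univ.filter fun i => c i ≠ 0).card ≤ Finset.univ.card :=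
        Finset.card_le_card (Finset.filter_subset _ _)
    _ = 36 := by simp

lemma wt_zero : wt 0 = 0 := by simp [wt]


variable {B : Submodule (ZMod 2) (Fin 36 → ZMod 2)}

lemma half_count (S : Finset (Fin 36 → ZMod 2)) (hS : ∀ c, c ∈ S ↔ c ∈ B)
    (hcard : S.card = 256)
    (φ : (Fin 36 → ZMod 2) → ZMod 2)
    (hadd : ∀ a b, φ (a + b) = φ a + φ b)
    (c₀ : Fin 36 → ZMod 2) (hc₀ : c₀ ∈ B) (hφ : φ c₀ = 1) :
    ∑ c ∈ S, v (φ c) = 128 := by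
  classical
  have hcc : c₀ + c₀ = 0 := by funext i; exact zmod_add_self (c₀ i)
  set A0 := S.filter (fun c => φ c = 0) with hA0
  set A1 := S.filter (fun c => ¬ φ c = 0) with hA1
  have hmem : ∀ c, c ∈ S → ((c + c₀) ∈ S) := by
    intro c hc
    rw [hS] at hc ⊢
    exact B.add_mem hc hc₀
  have hcards : A0.card = A1.card := by
    refine Finset.card_bij' (fun c _ => c + c₀) (fun c _ => c + c₀) ?_ ?_ ?_ ?_
    · intro c hc
      simp only [hA0, Finset.mem_filter] at hc
      simp only [hA1, Finset.mem_filter]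
      refine ⟨hmem c hc.1, ?_⟩
      rw [hadd, hc.2, hφ]
      decide
    · intro c hc
      simp only [hA1, Finset.mem_filter] at hc
      simp only [hA0, Finset.mem_filter]
      refine ⟨hmem c hc.1, ?_⟩
      have := zmod_one_of_ne _ hc.2
      rw [hadd, this, hφ]
      decide
    · intro c _; show c + c₀ + c₀ = c; rw [add_assoc, hcc, add_zero]
    · intro c _; show c + c₀ + c₀ = c; rw [add_assoc, hcc, add_zero]
  have hsplit : A0.card + A1.card = 256 := by
    rw [hA0, hA1, Finset.card_filter_add_card_filter_not, hcard]
  have hsum : ∑ c ∈ S, v (φ c) = A1.card := by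
    rw [← Finset.sum_filter_add_sum_filter_not S (fun c => φ c = 0)]
    rw [← hA0, ← hA1]
    have h0 : ∑ c ∈ A0, v (φ c) = 0 := by
      apply Finset.sum_eq_zero
      intro c hc
      simp only [hA0, Finset.mem_filter] at hc
      simp [v, hc.2]
    have h1 : ∑ c ∈ A1, v (φ c) = A1.card := by
      rw [Finset.sum_congr rfl (g := fun _ => (1:ℤ)) ?_]
      · simp
      · intro c hc
        simp only [hA1, Finset.mem_filter] at hc
        simp [v, hc.2]
    rw [h0, h1, zero_add]
  rw [hsum]
  omega


lemma func_count (S : Finset (Fin 36 → ZMod 2)) (hS : ∀ c, c ∈ S ↔ c ∈ B)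
    (hcard : S.card = 256)
    (hdual : ∀ x : Fin 36 → ZMod 2,
      (∀ c ∈ B, ∑ i, x i * c i = 0) → x ≠ 0 → 4 ≤ wt x)
    (x : Fin 36 → ZMod 2) (hx : x ≠ 0) (hwt : wt x ≤ 3) :
    ∑ c ∈ S, v (∑ t, x t * c t) = 128 := by
  obtain ⟨c₀, hc₀, hnz⟩ : ∃ c₀ ∈ B, ∑ t, x t * c₀ t ≠ 0 := by
    by_contra h
    push_neg at h
    have := hdual x h hx
    omega
  exact half_count S hS hcard (fun c => ∑ t, x t * c t)
    (fun a b => by simp [Pi.add_apply, mul_add, Finset.sum_add_distrib])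
    c₀ hc₀ (zmod_one_of_ne _ hnz)

lemma single_sum (i : Fin 36) (c : Fin 36 → ZMod 2) :
    ∑ t, (Pi.single i 1 : Fin 36 → ZMod 2) t * c t = c i := by
  rw [Finset.sum_eq_single i]
  · rw [Pi.single_eq_same, one_mul]
  · intro b _ hb
    rw [Pi.single_eq_of_ne hb, zero_mul]
  · intro h; exact absurd (Finset.mem_univ i) h

lemma supp_single (i : Fin 36) :
    (Finset.univ.filter fun t => (Pi.single i 1 : Fin 36 → ZMod 2) t ≠ 0) ⊆ {i} := by
  intro t ht
  simp only [Finset.mem_filter] at ht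
  simp only [Finset.mem_singleton]
  by_contra hne
  exact ht.2 (Pi.single_eq_of_ne hne 1)

lemma count1 (S : Finset (Fin 36 → ZMod 2)) (hS : ∀ c, c ∈ S ↔ c ∈ B)
    (hcard : S.card = 256)
    (hdual : ∀ x : Fin 36 → ZMod 2,
      (∀ c ∈ B, ∑ i, x i * c i = 0) → x ≠ 0 → 4 ≤ wt x)
    (i : Fin 36) : ∑ c ∈ S, v (c i) = 128 := by
  have hnz : (Pi.single i 1 : Fin 36 → ZMod 2) ≠ 0 := by
    intro h0
    have := congrFun h0 i
    rw [Pi.single_eq_same] at this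
    exact one_ne_zero this
  have hw : wt (Pi.single i 1 : Fin 36 → ZMod 2) ≤ 3 := by
    unfold wt
    calc (Finset.univ.filter fun t => (Pi.single i 1 : Fin 36 → ZMod 2) t ≠ 0).card
        ≤ ({i} : Finset (Fin 36)).card := Finset.card_le_card (supp_single i)
      _ ≤ 3 := by simp
  have h := func_count S hS hcard hdual (Pi.single i 1) hnz hw
  calc ∑ c ∈ S, v (c i) = ∑ c ∈ S, v (∑ t, (Pi.single i 1 : Fin 36 → ZMod 2) t * c t) := by
        apply Finset.sum_congr rfl; intro c _; rw [single_sum]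
    _ = 128 := h

lemma count2 (S : Finset (Fin 36 → ZMod 2)) (hS : ∀ c, c ∈ S ↔ c ∈ B)
    (hcard : S.card = 256)
    (hdual : ∀ x : Fin 36 → ZMod 2,
      (∀ c ∈ B, ∑ i, x i * c i = 0) → x ≠ 0 → 4 ≤ wt x)
    (i j : Fin 36) (hij : i ≠ j) : ∑ c ∈ S, v (c i + c j) = 128 := by
  set x : Fin 36 → ZMod 2 := Pi.single i 1 + Pi.single j 1 with hxdef
  have hxi : x i = 1 := by
    show (Pi.single i 1 : Fin 36 → ZMod 2) i + (Pi.single j 1 : Fin 36 → ZMod 2) i = 1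
    rw [Pi.single_eq_same, Pi.single_eq_of_ne hij, add_zero]
  have hnz : x ≠ 0 := by
    intro h0
    have := congrFun h0 i
    rw [hxi] at this
    simp at this
  have hw : wt x ≤ 3 := by
    unfold wt
    have hsub : (Finset.univ.filter fun t => x t ≠ 0) ⊆ {i, j} := by
      intro t ht
      simp only [Finset.mem_filter] at ht
      simp only [Finset.mem_insert, Finset.mem_singleton]
      by_contra hne
      push_neg at hne
      apply ht.2
      show (Pi.single i 1 : Fin 36 → ZMod 2) t + (Pi.single j 1 : Fin 36 → ZMod 2) t = 0
      rw [Pi.single_eq_of_ne hne.1, Pi.single_eq_of_ne hne.2, add_zero]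
    calc (Finset.univ.filter fun t => x t ≠ 0).card
        ≤ ({i, j} : Finset (Fin 36)).card := Finset.card_le_card hsub
      _ ≤ 3 := by
          apply le_trans (Finset.card_insert_le _ _)
          simp
  have h := func_count S hS hcard hdual x hnz hw
  have hsum : ∀ c : Fin 36 → ZMod 2, ∑ t, x t * c t = c i + c j := by
    intro c
    calc ∑ t, x t * c t
        = ∑ t, ((Pi.single i 1 : Fin 36 → ZMod 2) t * c t
            + (Pi.single j 1 : Fin 36 → ZMod 2) t * c t) := by
          apply Finset.sum_congr rfl
          intro t _
          rw [hxdef, Pi.add_apply, add_mul]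
      _ = (∑ t, (Pi.single i 1 : Fin 36 → ZMod 2) t * c t)
            + ∑ t, (Pi.single j 1 : Fin 36 → ZMod 2) t * c t := Finset.sum_add_distrib
      _ = c i + c j := by rw [single_sum, single_sum]
  have step : ∑ c ∈ S, v (c i + c j) = ∑ c ∈ S, v (∑ t, x t * c t) := by
    apply Finset.sum_congr rfl
    intro c _
    rw [hsum c]
  rw [step]
  exact h

lemma count3 (S : Finset (Fin 36 → ZMod 2)) (hS : ∀ c, c ∈ S ↔ c ∈ B)
    (hcard : S.card = 256)
    (hdual : ∀ x : Fin 36 → ZMod 2,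
      (∀ c ∈ B, ∑ i, x i * c i = 0) → x ≠ 0 → 4 ≤ wt x)
    (i j k : Fin 36) : ∑ c ∈ S, v (c i + c j + c k) = 128 := by
  by_cases hij : i = j
  · subst hij
    have : ∀ c : Fin 36 → ZMod 2, c i + c i + c k = c k := by
      intro c; rw [zmod_add_self, zero_add]
    rw [Finset.sum_congr rfl (fun c _ => by rw [this c])]
    exact count1 S hS hcard hdual k
  · by_cases hik : i = k
    · subst hik
      have : ∀ c : Fin 36 → ZMod 2, c i + c j + c i = c j := by
        intro c
        have h1 : c i + c j + c i = c i + c i + c j := by ring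
        rw [h1, zmod_add_self, zero_add]
      rw [Finset.sum_congr rfl (fun c _ => by rw [this c])]
      exact count1 S hS hcard hdual j
    · by_cases hjk : j = k
      · subst hjk
        have : ∀ c : Fin 36 → ZMod 2, c i + c j + c j = c i := by
          intro c; rw [add_assoc, zmod_add_self, add_zero]
        rw [Finset.sum_congr rfl (fun c _ => by rw [this c])]
        exact count1 S hS hcard hdual i
      · -- all distinct
        set x : Fin 36 → ZMod 2 := Pi.single i 1 + Pi.single j 1 + Pi.single k 1 with hxdef
        have hxi : x i = 1 := by
          show (Pi.single i 1 : Fin 36 → ZMod 2) i + (Pi.single j 1 : Fin 36 → ZMod 2) i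
              + (Pi.single k 1 : Fin 36 → ZMod 2) i = 1
          rw [Pi.single_eq_same, Pi.single_eq_of_ne hij, Pi.single_eq_of_ne hik, add_zero, add_zero]
        have hnz : x ≠ 0 := by
          intro h0
          have := congrFun h0 i
          rw [hxi] at this
          simp at this
        have hw : wt x ≤ 3 := by
          unfold wt
          have hsub : (Finset.univ.filter fun t => x t ≠ 0) ⊆ {i, j, k} := by
            intro t ht
            simp only [Finset.mem_filter] at ht
            simp only [Finset.mem_insert, Finset.mem_singleton]
            by_contra hne
            push_neg at hne
            apply ht.2
            show (Pi.single i 1 : Fin 36 → ZMod 2) t + (Pi.single j 1 : Fin 36 → ZMod 2) t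
                + (Pi.single k 1 : Fin 36 → ZMod 2) t = 0
            rw [Pi.single_eq_of_ne hne.1, Pi.single_eq_of_ne hne.2.1,
              Pi.single_eq_of_ne hne.2.2, add_zero, add_zero]
          calc (Finset.univ.filter fun t => x t ≠ 0).card
              ≤ ({i, j, k} : Finset (Fin 36)).card := Finset.card_le_card hsub
            _ ≤ 3 := by
                apply le_trans (Finset.card_insert_le _ _)
                have := Finset.card_insert_le j ({k} : Finset (Fin 36))
                simp at this ⊢
                omega
        have h := func_count S hS hcard hdual x hnz hw
        have hsum : ∀ c : Fin 36 → ZMod 2, ∑ t, x t * c t = c i + c j + c k := by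
          intro c
          calc ∑ t, x t * c t
              = ∑ t, ((Pi.single i 1 : Fin 36 → ZMod 2) t * c t
                  + (Pi.single j 1 : Fin 36 → ZMod 2) t * c t
                  + (Pi.single k 1 : Fin 36 → ZMod 2) t * c t) := by
                apply Finset.sum_congr rfl
                intro t _
                rw [hxdef, Pi.add_apply, Pi.add_apply, add_mul, add_mul]
            _ = (∑ t, ((Pi.single i 1 : Fin 36 → ZMod 2) t * c t
                  + (Pi.single j 1 : Fin 36 → ZMod 2) t * c t))
                  + ∑ t, (Pi.single k 1 : Fin 36 → ZMod 2) t * c t := Finset.sum_add_distrib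
            _ = ((∑ t, (Pi.single i 1 : Fin 36 → ZMod 2) t * c t)
                  + ∑ t, (Pi.single j 1 : Fin 36 → ZMod 2) t * c t)
                  + ∑ t, (Pi.single k 1 : Fin 36 → ZMod 2) t * c t := by
                rw [Finset.sum_add_distrib]
            _ = c i + c j + c k := by rw [single_sum, single_sum, single_sum]
        have step : ∑ c ∈ S, v (c i + c j + c k) = ∑ c ∈ S, v (∑ t, x t * c t) := by
          apply Finset.sum_congr rfl
          intro c _
          rw [hsum c]
        rw [step]
        exact h


def A2 (i j : Fin 36) : ℤ := if i = j then 0 else 128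

lemma count2' (S : Finset (Fin 36 → ZMod 2)) (hS : ∀ c, c ∈ S ↔ c ∈ B)
    (hcard : S.card = 256)
    (hdual : ∀ x : Fin 36 → ZMod 2,
      (∀ c ∈ B, ∑ i, x i * c i = 0) → x ≠ 0 → 4 ≤ wt x)
    (i j : Fin 36) : ∑ c ∈ S, v (c i + c j) = A2 i j := by
  by_cases h : i = j
  · subst h
    rw [A2, if_pos rfl]
    apply Finset.sum_eq_zero
    intro c _
    rw [zmod_add_self]
    simp [v]
  · rw [A2, if_neg h]
    exact count2 S hS hcard hdual i j h

lemma sumA2 (i : Fin 36) : ∑ j, A2 i j = 4480 := by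
  have h : ∀ j, A2 i j = 128 - (if i = j then (128:ℤ) else 0) := by
    intro j; rw [A2]; split <;> norm_num
  rw [Finset.sum_congr rfl fun j _ => h j, Finset.sum_sub_distrib, Finset.sum_ite_eq,
    Finset.sum_const, Finset.card_univ]
  simp

lemma A2_symm (i j : Fin 36) : A2 i j = A2 j i := by
  rw [A2, A2]
  by_cases h : i = j
  · rw [if_pos h, if_pos h.symm]
  · rw [if_neg h, if_neg (fun hh => h hh.symm)]

lemma momT1 (S : Finset (Fin 36 → ZMod 2)) (hS : ∀ c, c ∈ S ↔ c ∈ B)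
    (hcard : S.card = 256)
    (hdual : ∀ x : Fin 36 → ZMod 2,
      (∀ c ∈ B, ∑ i, x i * c i = 0) → x ≠ 0 → 4 ≤ wt x) :
    ∑ c ∈ S, (wt c : ℤ) = 4608 := by
  rw [Finset.sum_congr rfl fun c _ => wv c, Finset.sum_comm,
    Finset.sum_congr rfl fun i (_ : i ∈ Finset.univ) => count1 S hS hcard hdual i,
    Finset.sum_const, Finset.card_univ]
  simp

lemma momT2 (S : Finset (Fin 36 → ZMod 2)) (hS : ∀ c, c ∈ S ↔ c ∈ B)
    (hcard : S.card = 256)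
    (hdual : ∀ x : Fin 36 → ZMod 2,
      (∀ c ∈ B, ∑ i, x i * c i = 0) → x ≠ 0 → 4 ≤ wt x) :
    ∑ c ∈ S, (wt c : ℤ)^2 = 85248 := by
  have sqid : ∀ c : Fin 36 → ZMod 2,
      2 * (wt c : ℤ)^2 = ∑ i, ∑ j, (v (c i) + v (c j) - v (c i + c j)) := by
    intro c
    rw [wv]
    calc 2 * (∑ i, v (c i))^2
        = 2 * ((∑ i, v (c i)) * (∑ j, v (c j))) := by ring
      _ = 2 * ∑ i, ∑ j, v (c i) * v (c j) := by rw [Finset.sum_mul_sum]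
      _ = ∑ i, ∑ j, 2 * (v (c i) * v (c j)) := by simp only [Finset.mul_sum]
      _ = ∑ i, ∑ j, (v (c i) + v (c j) - v (c i + c j)) := by
          apply Finset.sum_congr rfl; intro i _
          apply Finset.sum_congr rfl; intro j _
          exact v_sq _ _
  have inner : ∀ i j : Fin 36,
      ∑ c ∈ S, (v (c i) + v (c j) - v (c i + c j)) = 256 - A2 i j := by
    intro i j
    simp only [Finset.sum_add_distrib, Finset.sum_sub_distrib]
    rw [count1 S hS hcard hdual i, count1 S hS hcard hdual j, count2' S hS hcard hdual i j]
    ring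
  have key : 2 * ∑ c ∈ S, (wt c : ℤ)^2 = 170496 := by
    rw [Finset.mul_sum, Finset.sum_congr rfl fun c _ => sqid c, Finset.sum_comm]
    have h1 : ∀ i : Fin 36,
        ∑ c ∈ S, ∑ j, (v (c i) + v (c j) - v (c i + c j)) = 36 * 256 - 4480 := by
      intro i
      rw [Finset.sum_comm, Finset.sum_congr rfl fun j (_ : j ∈ Finset.univ) => inner i j,
        Finset.sum_sub_distrib, Finset.sum_const, Finset.card_univ, sumA2 i]
      simp
    rw [Finset.sum_congr rfl fun i (_ : i ∈ Finset.univ) => h1 i,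
      Finset.sum_const, Finset.card_univ]
    simp
  linarith

lemma momT3 (S : Finset (Fin 36 → ZMod 2)) (hS : ∀ c, c ∈ S ↔ c ∈ B)
    (hcard : S.card = 256)
    (hdual : ∀ x : Fin 36 → ZMod 2,
      (∀ c ∈ B, ∑ i, x i * c i = 0) → x ≠ 0 → 4 ≤ wt x) :
    ∑ c ∈ S, (wt c : ℤ)^3 = 1617408 := by
  have cubid : ∀ c : Fin 36 → ZMod 2,
      4 * (wt c : ℤ)^3 = ∑ i, ∑ j, ∑ k,
        (v (c i) + v (c j) + v (c k) - v (c i + c j) - v (c i + c k) - v (c j + c k)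
          + v (c i + c j + c k)) := by
    intro c
    rw [wv]
    have e2 : (∑ i, ∑ j, v (c i) * v (c j)) * (∑ k, v (c k))
        = ∑ i, ∑ j, ∑ k, v (c i) * v (c j) * v (c k) := by
      rw [Finset.sum_mul]
      apply Finset.sum_congr rfl; intro i _
      rw [Finset.sum_mul]
      apply Finset.sum_congr rfl; intro j _
      rw [Finset.mul_sum]
    calc 4 * (∑ i, v (c i))^3
        = 4 * ((∑ i, v (c i)) * (∑ j, v (c j)) * (∑ k, v (c k))) := by ring
      _ = 4 * ∑ i, ∑ j, ∑ k, v (c i) * v (c j) * v (c k) := by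
          rw [Finset.sum_mul_sum, e2]
      _ = ∑ i, ∑ j, ∑ k, 4 * (v (c i) * v (c j) * v (c k)) := by
          simp only [Finset.mul_sum]
      _ = _ := by
          apply Finset.sum_congr rfl; intro i _
          apply Finset.sum_congr rfl; intro j _
          apply Finset.sum_congr rfl; intro k _
          exact v_cube _ _ _
  have inner : ∀ i j k : Fin 36,
      ∑ c ∈ S, (v (c i) + v (c j) + v (c k) - v (c i + c j) - v (c i + c k) - v (c j + c k)
        + v (c i + c j + c k)) = 512 - A2 i j - A2 i k - A2 j k := by
    intro i j k
    simp only [Finset.sum_add_distrib, Finset.sum_sub_distrib]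
    rw [count1 S hS hcard hdual i, count1 S hS hcard hdual j, count1 S hS hcard hdual k,
      count2' S hS hcard hdual i j, count2' S hS hcard hdual i k, count2' S hS hcard hdual j k,
      count3 S hS hcard hdual i j k]
    ring
  have key : 4 * ∑ c ∈ S, (wt c : ℤ)^3 = 6469632 := by
    rw [Finset.mul_sum, Finset.sum_congr rfl fun c _ => cubid c, Finset.sum_comm]
    have h1 : ∀ i : Fin 36,
        ∑ c ∈ S, ∑ j, ∑ k, (v (c i) + v (c j) + v (c k) - v (c i + c j) - v (c i + c k)
          - v (c j + c k) + v (c i + c j + c k)) = 179712 := by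
      intro i
      rw [Finset.sum_comm]
      have h2 : ∀ j : Fin 36,
          ∑ c ∈ S, ∑ k, (v (c i) + v (c j) + v (c k) - v (c i + c j) - v (c i + c k)
            - v (c j + c k) + v (c i + c j + c k)) = 9472 - 36 * A2 i j := by
        intro j
        rw [Finset.sum_comm, Finset.sum_congr rfl fun k (_ : k ∈ Finset.univ) => inner i j k]
        have h3 : ∀ k : Fin 36, (512:ℤ) - A2 i j - A2 i k - A2 j k
            = (512 - A2 i j) - (A2 i k + A2 j k) := by intro k; ring
        rw [Finset.sum_congr rfl fun k _ => h3 k, Finset.sum_sub_distrib,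
          Finset.sum_add_distrib, sumA2 i, sumA2 j, Finset.sum_const, Finset.card_univ]
        simp
        ring
      rw [Finset.sum_congr rfl fun j (_ : j ∈ Finset.univ) => h2 j,
        Finset.sum_sub_distrib, Finset.sum_const, Finset.card_univ, ← Finset.mul_sum, sumA2 i]
      simp
    rw [Finset.sum_congr rfl fun i (_ : i ∈ Finset.univ) => h1 i,
      Finset.sum_const, Finset.card_univ]
    simp
  linarith


lemma key_sum (S : Finset (Fin 36 → ZMod 2)) (hS : ∀ c, c ∈ S ↔ c ∈ B)
    (hcard : S.card = 256)
    (hdual : ∀ x : Fin 36 → ZMod 2,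
      (∀ c ∈ B, ∑ i, x i * c i = 0) → x ≠ 0 → 4 ≤ wt x) :
    ∑ c ∈ S, ((wt c : ℤ) - 16) * ((wt c : ℤ) - 20) * ((wt c : ℤ) - 24) = -7680 := by
  have expand : ∀ c : Fin 36 → ZMod 2,
      ((wt c : ℤ) - 16) * ((wt c : ℤ) - 20) * ((wt c : ℤ) - 24)
        = (wt c:ℤ)^3 - 60*(wt c:ℤ)^2 + 1184*(wt c:ℤ) - 7680 := by intro c; ring
  rw [Finset.sum_congr rfl fun c _ => expand c]
  have hsplit : ∑ c ∈ S, ((wt c:ℤ)^3 - 60*(wt c:ℤ)^2 + 1184*(wt c:ℤ) - 7680)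
      = (∑ c ∈ S, (wt c:ℤ)^3) - 60 * (∑ c ∈ S, (wt c:ℤ)^2)
        + 1184 * (∑ c ∈ S, (wt c:ℤ)) - 256 * 7680 := by
    simp only [Finset.sum_sub_distrib, Finset.sum_add_distrib, ← Finset.mul_sum,
      Finset.sum_const, hcard]
    norm_num
  rw [hsplit, momT1 S hS hcard hdual, momT2 S hS hcard hdual, momT3 S hS hcard hdual]
  norm_num

lemma eq_zero_of_wt_eq_zero (c : Fin 36 → ZMod 2) (h : wt c = 0) : c = 0 := by
  funext i
  by_contra hne
  have hi : i ∈ Finset.univ.filter fun t => c t ≠ 0 := Finset.mem_filter.mpr ⟨Finset.mem_univ i, hne⟩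
  unfold wt at h
  rw [Finset.card_eq_zero] at h
  rw [h] at hi
  exact absurd hi (Finset.notMem_empty i)

lemma tri (S : Finset (Fin 36 → ZMod 2)) (hS : ∀ c, c ∈ S ↔ c ∈ B)
    (hcard : S.card = 256)
    (hde : ∀ c ∈ B, 4 ∣ wt c)
    (hmin : ∀ c ∈ B, c ≠ 0 → 16 ≤ wt c)
    (hdual : ∀ x : Fin 36 → ZMod 2,
      (∀ c ∈ B, ∑ i, x i * c i = 0) → x ≠ 0 → 4 ≤ wt x) :
    ∀ c ∈ S, c ≠ 0 → wt c = 16 ∨ wt c = 20 ∨ wt c = 24 := by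
  set P : (Fin 36 → ZMod 2) → ℤ :=
    fun c => ((wt c : ℤ) - 16) * ((wt c : ℤ) - 20) * ((wt c : ℤ) - 24) with hP
  have h0S : (0 : Fin 36 → ZMod 2) ∈ S := (hS 0).mpr B.zero_mem
  have hP0 : P 0 = -7680 := by rw [hP]; simp [wt_zero]
  have hzero : ∑ c ∈ S.erase 0, P c = 0 := by
    have h1 := Finset.sum_erase_add S P h0S
    have hk : ∑ c ∈ S, P c = -7680 := key_sum S hS hcard hdual
    rw [hk, hP0] at h1
    linarith
  have nonneg : ∀ c ∈ S.erase 0, 0 ≤ P c := by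
    intro c hc
    obtain ⟨hne, hcS⟩ := Finset.mem_erase.mp hc
    have h16 : 16 ≤ wt c := hmin c ((hS c).mp hcS) hne
    have h36 : wt c ≤ 36 := wt_le c
    have h4 : 4 ∣ wt c := hde c ((hS c).mp hcS)
    have hcase : wt c = 16 ∨ wt c = 20 ∨ wt c = 24 ∨ wt c = 28 ∨ wt c = 32 ∨ wt c = 36 := by
      omega
    show (0:ℤ) ≤ ((wt c : ℤ) - 16) * ((wt c : ℤ) - 20) * ((wt c : ℤ) - 24)
    rcases hcase with h|h|h|h|h|h <;> rw [h] <;> norm_num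
  intro c hcS hne
  have hPc : ((wt c : ℤ) - 16) * ((wt c : ℤ) - 20) * ((wt c : ℤ) - 24) = 0 :=
    (Finset.sum_eq_zero_iff_of_nonneg nonneg).mp hzero c (Finset.mem_erase.mpr ⟨hne, hcS⟩)
  rcases mul_eq_zero.mp hPc with h | h
  · rcases mul_eq_zero.mp h with h' | h'
    · left; have : (wt c : ℤ) = 16 := by linarith [sub_eq_zero.mp h']
      exact_mod_cast this
    · right; left; have : (wt c : ℤ) = 20 := by linarith [sub_eq_zero.mp h']
      exact_mod_cast this
  · right; right; have : (wt c : ℤ) = 24 := by linarith [sub_eq_zero.mp h]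
    exact_mod_cast this

lemma sum_split {M : Type*} [AddCommMonoid M] (S : Finset (Fin 36 → ZMod 2))
    (h0S : (0 : Fin 36 → ZMod 2) ∈ S)
    (htri : ∀ c ∈ S, c ≠ 0 → wt c = 16 ∨ wt c = 20 ∨ wt c = 24)
    (f : ℕ → M) :
    ∑ c ∈ S, f (wt c) = f 0
      + (S.filter fun c => wt c = 16).card • f 16
      + (S.filter fun c => wt c = 20).card • f 20
      + (S.filter fun c => wt c = 24).card • f 24 := by
  classical
  have hconst : ∀ (T : Finset (Fin 36 → ZMod 2)) (w : ℕ), (∀ c ∈ T, wt c = w) →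
      ∑ c ∈ T, f (wt c) = T.card • f w := by
    intro T w hw
    rw [Finset.sum_congr rfl fun c hc => by rw [hw c hc], Finset.sum_const]
  have step1 := Finset.sum_filter_add_sum_filter_not S (fun c => wt c = 16) (fun c => f (wt c))
  have step2 := Finset.sum_filter_add_sum_filter_not (S.filter fun c => ¬ wt c = 16)
    (fun c => wt c = 20) (fun c => f (wt c))
  have step3 := Finset.sum_filter_add_sum_filter_not
    ((S.filter fun c => ¬ wt c = 16).filter fun c => ¬ wt c = 20)
    (fun c => wt c = 24) (fun c => f (wt c))
  have e20 : (S.filter fun c => ¬ wt c = 16).filter (fun c => wt c = 20)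
      = S.filter fun c => wt c = 20 := by
    ext c
    simp only [Finset.mem_filter]
    constructor
    · rintro ⟨⟨h1, _⟩, h3⟩; exact ⟨h1, h3⟩
    · rintro ⟨h1, h3⟩; exact ⟨⟨h1, by omega⟩, h3⟩
  have e24 : ((S.filter fun c => ¬ wt c = 16).filter fun c => ¬ wt c = 20).filter
      (fun c => wt c = 24) = S.filter fun c => wt c = 24 := by
    ext c
    simp only [Finset.mem_filter]
    constructor
    · rintro ⟨⟨⟨h1, _⟩, _⟩, h3⟩; exact ⟨h1, h3⟩
    · rintro ⟨h1, h3⟩; exact ⟨⟨⟨h1, by omega⟩, by omega⟩, h3⟩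
  have erest : (((S.filter fun c => ¬ wt c = 16).filter fun c => ¬ wt c = 20).filter
      fun c => ¬ wt c = 24) = {0} := by
    ext c
    simp only [Finset.mem_filter, Finset.mem_singleton]
    constructor
    · rintro ⟨⟨⟨h1, h16⟩, h20⟩, h24⟩
      by_contra hne
      rcases htri c h1 hne with h|h|h
      · exact h16 h
      · exact h20 h
      · exact h24 h
    · rintro rfl
      refine ⟨⟨⟨h0S, ?_⟩, ?_⟩, ?_⟩ <;> rw [wt_zero] <;> omega
  have c16 : ∑ c ∈ S.filter (fun c => wt c = 16), f (wt c)
      = (S.filter fun c => wt c = 16).card • f 16 :=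
    hconst _ _ (fun c hc => (Finset.mem_filter.mp hc).2)
  have c20 : ∑ c ∈ (S.filter fun c => ¬ wt c = 16).filter (fun c => wt c = 20), f (wt c)
      = (S.filter fun c => wt c = 20).card • f 20 := by
    rw [e20]; exact hconst _ _ (fun c hc => (Finset.mem_filter.mp hc).2)
  have c24 : ∑ c ∈ ((S.filter fun c => ¬ wt c = 16).filter fun c => ¬ wt c = 20).filter
      (fun c => wt c = 24), f (wt c) = (S.filter fun c => wt c = 24).card • f 24 := by
    rw [e24]; exact hconst _ _ (fun c hc => (Finset.mem_filter.mp hc).2)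
  have crest : ∑ c ∈ (((S.filter fun c => ¬ wt c = 16).filter fun c => ¬ wt c = 20).filter
      fun c => ¬ wt c = 24), f (wt c) = f 0 := by
    rw [erest, Finset.sum_singleton, wt_zero]
  calc ∑ c ∈ S, f (wt c)
      = ∑ c ∈ S.filter (fun c => wt c = 16), f (wt c)
        + ∑ c ∈ S.filter (fun c => ¬ wt c = 16), f (wt c) := step1.symm
    _ = _ := by
        rw [← step2, ← step3, c16, c20, c24, crest]
        abel

end Stmt2Aux

open Stmt2Aux

set_option maxRecDepth 4000 in
theorem stmt2 (B : Submodule (ZMod 2) (Fin 36 → ZMod 2))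
    (hdim : Module.finrank (ZMod 2) B = 8)
    (hde : ∀ c ∈ B, 4 ∣ wt c)
    (hmin : ∀ c ∈ B, c ≠ 0 → 16 ≤ wt c)
    (hdual : ∀ x : Fin 36 → ZMod 2,
      (∀ c ∈ B, ∑ i, x i * c i = 0) → x ≠ 0 → 4 ≤ wt x) :
    (∑ x : Fin 36 → ZMod 2, if x ∈ B then (X : Polynomial ℤ) ^ wt x else 0)
      = 1 + 153 * X ^ 16 + 72 * X ^ 20 + 30 * X ^ 24 := by
  classical
  set S : Finset (Fin 36 → ZMod 2) := Finset.univ.filter (fun x => x ∈ B) with hSdef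
  have hS : ∀ c, c ∈ S ↔ c ∈ B := by intro c; rw [hSdef]; simp
  have hcard : S.card = 256 := by
    have h1 : Fintype.card ↥B = 2 ^ 8 := by
      have h := Module.card_eq_pow_finrank (K := ZMod 2) (V := ↥B)
      rw [hdim, ZMod.card] at h
      exact h
    have h2 : S.card = Fintype.card {x : Fin 36 → ZMod 2 // x ∈ B} := by
      rw [hSdef, Fintype.card_subtype]
    rw [h2, h1]
    norm_num
  have h0S : (0 : Fin 36 → ZMod 2) ∈ S := (hS 0).mpr B.zero_mem
  have htri := tri S hS hcard hde hmin hdual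
  have e1 := sum_split (M := ℤ) S h0S htri (fun _ => (1:ℤ))
  have e2 := sum_split (M := ℤ) S h0S htri (fun n => (n:ℤ))
  have e3 := sum_split (M := ℤ) S h0S htri (fun n => (n:ℤ)^2)
  rw [Finset.sum_const, hcard] at e1
  rw [momT1 S hS hcard hdual] at e2
  rw [momT2 S hS hcard hdual] at e3
  simp only [smul_eq_mul, nsmul_eq_mul, mul_one] at e1 e2 e3
  norm_num at e1 e2 e3
  have hn16 : (S.filter fun c => wt c = 16).card = 153 := by omega
  have hn20 : (S.filter fun c => wt c = 20).card = 72 := by omega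
  have hn24 : (S.filter fun c => wt c = 24).card = 30 := by omega
  have hgoal : (∑ x : Fin 36 → ZMod 2, if x ∈ B then (X : Polynomial ℤ) ^ wt x else 0)
      = ∑ c ∈ S, (X : Polynomial ℤ) ^ wt c := by
    rw [hSdef, Finset.sum_filter]
  rw [hgoal, sum_split (M := Polynomial ℤ) S h0S htri (fun n => (X : Polynomial ℤ)^n),
    hn16, hn20, hn24]
  simp only [nsmul_eq_mul, pow_zero]
  norm_num
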